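/- Let I be an ideal on ℕ and (α_n) a strictly decreasing sequence in (0,1/2] converging to 0. If I can be extended to a P⁺-ideal on ℕ, then conv(I,(α_n)) can be extended to a P⁺-ideal on [0,1]∩ℚ. -/

import Mathlib

open Filter Topology Set

/-- The upper-density submeasure `φ(A) = sup_n |A ∩ [0,n]| / (n+1)`. -/
noncomputable def phi (A : Set ℕ) : ℝ :=
  ⨆ n : ℕ, ((A ∩ Set.Iic n).ncard : ℝ) / (n + 1)

/-- The ideal of asymptotic density zero sets. -/
def densityZero : Set (Set ℕ) :=
  {A | Tendsto (fun n : ℕ => ((A ∩ Set.Iic n).ncard : ℝ) / (n + 1)) atTop (𝓝 0)}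

/-- `I` is an ideal on `X` (containing all finite sets, proper). -/
def IsIdeal {X : Type*} (I : Set (Set X)) : Prop :=
  (∀ A ∈ I, ∀ B, B ⊆ A → B ∈ I) ∧ (∀ A ∈ I, ∀ B ∈ I, A ∪ B ∈ I) ∧
    (∀ A : Set X, A.Finite → A ∈ I) ∧ Set.univ ∉ I

/-- `J` is a P⁺-ideal. -/
def IsPPlus {X : Type*} (J : Set (Set X)) : Prop :=
  ∀ A : ℕ → Set X, (∀ n, A (n + 1) ⊆ A n) → (∀ n, A n ∉ J) →
    ∃ B ∉ J, ∀ n, (B \ A n).Finite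

/-- Katětov order. -/
def KatLE {X Y : Type*} (I : Set (Set X)) (J : Set (Set Y)) : Prop :=
  ∃ f : Y → X, ∀ A ∈ I, f ⁻¹' A ∈ J

/-- membership in the class `S` of strictly decreasing null sequences in `(0,1/2]`. -/
def memS (α : ℕ → ℝ) : Prop :=
  (∀ n, 0 < α n) ∧ (∀ n, α n ≤ 1 / 2) ∧ StrictAnti α ∧ Tendsto α atTop (𝓝 0)

/-- The underlying countable set `[0,1] ∩ ℚ`. -/
abbrev Q01 : Type := ↥(Set.Icc (0 : ℚ) 1)

/-- The real number corresponding to a point of `[0,1] ∩ ℚ`. -/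
noncomputable def qr (q : Q01) : ℝ := ((q : ℚ) : ℝ)

/-- The set `S ⊆ [0,1]∩ℚ` converges to `x ∈ ℝ`. -/
def ConvTo (S : Set Q01) (x : ℝ) : Prop :=
  ∀ ε > (0 : ℝ), {q ∈ S | ε ≤ |qr q - x|}.Finite

/-- `S` converges `I`-quickly with respect to `α` to the point `x`. -/
def IQuickTo (I : Set (Set ℕ)) (α : ℕ → ℝ) (S : Set Q01) (x : ℝ) : Prop :=
  ConvTo S x ∧
    {n : ℕ | ∃ q ∈ S, α (n + 1) ≤ |qr q - x| ∧ |qr q - x| < α n} ∈ I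

/-- `S` converges `I`-quickly with respect to `α`. -/
def IQuick (I : Set (Set ℕ)) (α : ℕ → ℝ) (S : Set Q01) : Prop :=
  ∃ x ∈ Set.Icc (0 : ℝ) 1, IQuickTo I α S x

/-- The ideal `conv(I,(α_n))` on `[0,1] ∩ ℚ`. -/
def convQI (I : Set (Set ℕ)) (α : ℕ → ℝ) : Set (Set Q01) :=
  {A | ∃ F : Finset (Set Q01), (∀ S ∈ F, IQuick I α S) ∧ A ⊆ ⋃₀ ↑F}

/-- The ideal `conv` on `[0,1] ∩ ℚ` generated by convergent sequences. -/
def convIdeal : Set (Set Q01) :=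
  {A | ∃ F : Finset (Set Q01),
    (∀ S ∈ F, ∃ x ∈ Set.Icc (0 : ℝ) 1, ConvTo S x) ∧ A ⊆ ⋃₀ ↑F}

/-- Identify a point of Cantor space `2^X` with a subset of `X`. -/
def toSet {X : Type*} (f : X → Bool) : Set X := {x | f x = true}

/-- `Σ⁰ₙ` sets of a topological space: `IsSigma0 1 = open`,
`IsSigma0 (n+1)` = countable unions of complements of `Σ⁰ₙ` sets. -/
def IsSigma0 {X : Type*} [TopologicalSpace X] : ℕ → Set X → Prop
  | 0, _ => False
  | 1, S => IsOpen S
  | (n + 2), S => ∃ f : ℕ → Set X, (∀ k, IsSigma0 (n + 1) (f k)ᶜ) ∧ S = ⋃ k, f k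


theorem convQI_extend_of_extend (I : Set (Set ℕ)) (hI : IsIdeal I)
    (α : ℕ → ℝ) (hα : memS α)
    (h : ∃ J : Set (Set ℕ), IsIdeal J ∧ IsPPlus J ∧ I ⊆ J) :
    ∃ J' : Set (Set Q01), IsIdeal J' ∧ IsPPlus J' ∧ convQI I α ⊆ J' := by
  obtain ⟨J, ⟨hmono, hunion, hfin, hproper⟩, hJP, hIJ⟩ := h
  obtain ⟨hpos, hle, hanti, hlim⟩ := hα
  -- choose rationals v n with α (n+1) < qr (v n) < α n
  have hv : ∀ n : ℕ, ∃ q : Q01, α (n+1) < qr q ∧ qr q < α n := by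
    intro n
    obtain ⟨q, hq1, hq2⟩ := exists_rat_btwn (hanti (Nat.lt_succ_self n))
    have h0 : (0:ℝ) < (q:ℝ) := lt_trans (hpos (n+1)) hq1
    have h1 : (q:ℝ) ≤ 1 := le_trans (le_of_lt hq2) (le_trans (hle n) (by norm_num))
    exact ⟨⟨q, by exact_mod_cast le_of_lt h0, by exact_mod_cast h1⟩, hq1, hq2⟩
  choose v hv1 hv2 using hv
  have hanti' : StrictAnti fun n => qr (v n) :=
    strictAnti_nat_of_succ_lt fun n => lt_trans (hv2 (n+1)) (hv1 n)
  have hvinj : Function.Injective v := fun a b hab => hanti'.injective (by rw [hab])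
  -- the key lemma: every I-quick set has J-small preimage under v
  have key : ∀ S : Set Q01, IQuick I α S → v ⁻¹' S ∈ J := by
    intro S hS
    obtain ⟨x, hx, hconv, htr⟩ := hS
    rcases eq_or_lt_of_le hx.1 with hx0 | hx0
    · -- x = 0
      apply hmono _ (hIJ htr)
      intro n hn
      refine ⟨v n, hn, ?_, ?_⟩
      · rw [← hx0, sub_zero, abs_of_pos (lt_trans (hpos (n+1)) (hv1 n))]
        exact le_of_lt (hv1 n)
      · rw [← hx0, sub_zero, abs_of_pos (lt_trans (hpos (n+1)) (hv1 n))]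
        exact hv2 n
    · -- 0 < x
      have hfin1 : {q ∈ S | x/2 ≤ |qr q - x|}.Finite := hconv (x/2) (half_pos hx0)
      have hfin2 : {n : ℕ | x/2 < α n}.Finite := by
        have h1 : ∀ᶠ n in atTop, α n < x/2 := hlim.eventually (gt_mem_nhds (half_pos hx0))
        rw [← Nat.cofinite_eq_atTop] at h1
        exact (Filter.eventually_cofinite.mp h1).subset fun n hn => not_lt.mpr (le_of_lt hn)
      apply hfin
      apply Set.Finite.subset (Set.Finite.union (hfin1.preimage hvinj.injOn) hfin2)
      intro n hn
      by_cases hc : x/2 ≤ |qr (v n) - x|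
      · exact Or.inl ⟨hn, hc⟩
      · push_neg at hc
        have h2 : x/2 < qr (v n) := by
          have := (abs_lt.mp hc).1
          linarith
        exact Or.inr (lt_trans h2 (hv2 n))
  refine ⟨{A | v ⁻¹' A ∈ J}, ⟨?_, ?_, ?_, ?_⟩, ?_, ?_⟩
  · intro A hA B hBA
    exact hmono _ hA _ fun n hn => hBA hn
  · intro A hA B hB
    have : v ⁻¹' (A ∪ B) = v ⁻¹' A ∪ v ⁻¹' B := Set.preimage_union
    exact Set.mem_setOf_eq ▸ (this ▸ hunion _ hA _ hB)
  · intro A hA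
    exact hfin _ (hA.preimage hvinj.injOn)
  · intro hcon
    exact hproper (by simpa using hcon)
  · -- P+
    intro A hdec hposA
    obtain ⟨N, hN, hNfin⟩ := hJP (fun n => v ⁻¹' (A n))
      (fun n x hx => hdec n hx) (fun n => hposA n)
    refine ⟨v '' N, ?_, ?_⟩
    · simpa [Set.mem_setOf_eq, Set.preimage_image_eq N hvinj] using hN
    · intro n
      apply Set.Finite.subset ((hNfin n).image v)
      rintro q ⟨⟨m, hm, rfl⟩, hq⟩
      exact ⟨m, ⟨hm, hq⟩, rfl⟩
  · -- convQI I α ⊆ J'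
    intro A hA
    obtain ⟨F, hFq, hsub⟩ := hA
    have finU : ∀ G : Finset (Set Q01), (∀ S ∈ G, v ⁻¹' S ∈ J) → v ⁻¹' (⋃₀ ↑G) ∈ J := by
      intro G
      classical
      induction G using Finset.induction with
      | empty => intro _; simpa using hfin ∅ Set.finite_empty
      | insert _ _ hnotmem ih =>
        intro hall
        rw [Finset.coe_insert, Set.sUnion_insert, Set.preimage_union]
        exact hunion _ (hall _ (Finset.mem_insert_self _ _)) _
          (ih fun S hS => hall S (Finset.mem_insert_of_mem hS))
    exact hmono _ (finU F fun S hS => key S (hFq S hS)) _ fun n hn => hsub hn
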